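/- Fix a ≥ 0 and p̂ = (x̂,v̂) ∈ ℝⁿ×ℝⁿ, and let p(t) = p̂ + t·X^a_hb(p̂) be the zero-order-hold trajectory, i.e. x(t) = x̂ + t v̂ and v(t) = v̂ − t(2√μ v̂ + √μ_s∇f(x̂ + a v̂)). Then for every t ≥ 0, the function t ↦ V(p(t)) is differentiable and (d/dt)V(p(t)) + (√μ/4)V(p(t)) ≤ b^d_ET(p̂,t;a) ≤ b^d_ST(p̂,t;a). -/

import Mathlib

open scoped RealInnerProductSpace

noncomputable section

variable {n : ℕ}

local notation "E" => EuclideanSpace ℝ (Fin n)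

/-- √μ_s := 1 + √(μs) -/
def ms (μ s : ℝ) : ℝ := 1 + Real.sqrt (μ * s)

/-- Lyapunov function V(x,v). -/
def Vf (μ s : ℝ) (f : E → ℝ) (xs x v : E) : ℝ :=
  ms μ s * (f x - f xs) + (1 / 4) * ‖v‖ ^ 2
    + (1 / 4) * ‖v + (2 * Real.sqrt μ) • (x - xs)‖ ^ 2

def AET (μ s : ℝ) (f' : E → E) (a : ℝ) (x v : E) (t : ℝ) : ℝ :=
  2 * μ * t * ‖v‖ ^ 2 + ms μ s * (⟪f' (x + t • v) - f' x, v⟫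
    + 2 * t * Real.sqrt μ * ⟪f' (x + a • v), v⟫ + t * ms μ s * ‖f' (x + a • v)‖ ^ 2)

def BET (μ L s : ℝ) (f : E → ℝ) (f' : E → E) (a : ℝ) (x v : E) (t : ℝ) : ℝ :=
  Real.sqrt μ * t ^ 2 / 16 * ‖(2 * Real.sqrt μ) • v + ms μ s • f' (x + a • v)‖ ^ 2
    - t * μ / 4 * ‖v‖ ^ 2
    + Real.sqrt μ * ms μ s / 4 * (f (x + t • v) - f x - t * ⟪v, f' (x + a • v)⟫
        + t ^ 2 * ms μ s / 4 * ‖f' (x + a • v)‖ ^ 2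
        - t * Real.sqrt μ / L * ‖f' (x + a • v)‖ ^ 2
        + t * Real.sqrt μ * ⟪a • v, f' (x + a • v)⟫)

def CET (μ L s : ℝ) (f : E → ℝ) (f' : E → E) (a : ℝ) (x v : E) : ℝ :=
  -(13 * Real.sqrt μ / 16) * ‖v‖ ^ 2 - μ ^ 2 * Real.sqrt s / (2 * L ^ 2) * ‖f' x‖ ^ 2
    + ms μ s * (-(3 * Real.sqrt μ / (8 * L)) * ‖f' x‖ ^ 2
        + Real.sqrt μ * (f x - f (x + a • v))
        + Real.sqrt μ * ‖f' x‖ * ‖a • v‖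
        - μ * Real.sqrt μ / 2 * ‖a • v‖ ^ 2
        - ⟪f' (x + a • v) - f' x, v⟫
        + Real.sqrt μ * ⟪f' (x + a • v), a • v⟫)

def AST (μ L s : ℝ) (f' : E → E) (a : ℝ) (x v : E) : ℝ :=
  2 * μ * ‖v‖ ^ 2 + ms μ s * (L * ‖v‖ ^ 2 + 2 * Real.sqrt μ * ⟪f' (x + a • v), v⟫
    + ms μ s * ‖f' (x + a • v)‖ ^ 2)

def BlST (μ L s : ℝ) (f' : E → E) (a : ℝ) (x v : E) : ℝ :=
  Real.sqrt μ / 4 * (-(Real.sqrt μ) * ‖v‖ ^ 2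
    + ms μ s * (⟪f' x - f' (x + a • v), v⟫
        - Real.sqrt μ / L * ‖f' (x + a • v)‖ ^ 2
        + Real.sqrt μ * ⟪a • v, f' (x + a • v)⟫))

def BqST (μ L s : ℝ) (f' : E → E) (a : ℝ) (x v : E) : ℝ :=
  Real.sqrt μ / 16 * ‖(2 * Real.sqrt μ) • v + ms μ s • f' (x + a • v)‖ ^ 2
    + Real.sqrt μ * ms μ s / 4 * (L / 2 * ‖v‖ ^ 2 + ms μ s / 4 * ‖f' (x + a • v)‖ ^ 2)

/-- derivative-based event-triggered bound b^d_ET. -/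
def bdET (μ L s : ℝ) (f : E → ℝ) (f' : E → E) (a : ℝ) (x v : E) (t : ℝ) : ℝ :=
  AET μ s f' a x v t + BET μ L s f f' a x v t + CET μ L s f f' a x v

/-- derivative-based self-triggered bound b^d_ST. -/
def bdST (μ L s : ℝ) (f : E → ℝ) (f' : E → E) (a : ℝ) (x v : E) (t : ℝ) : ℝ :=
  BqST μ L s f' a x v * t ^ 2 + (AST μ L s f' a x v + BlST μ L s f' a x v) * t
    + CET μ L s f f' a x v

lemma dirDeriv (f : E → ℝ) (f' : E → E) (hgrad : ∀ x, HasGradientAt f (f' x) x)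
    (x u : E) (t : ℝ) :
    HasDerivAt (fun τ : ℝ => f (x + τ • u)) ⟪f' (x + t • u), u⟫ t := by
  have hγ : HasDerivAt (fun τ : ℝ => x + τ • u) u t := by
    simpa using ((hasDerivAt_id t).smul_const u).const_add x
  have h := (hgrad (x + t • u)).hasFDerivAt.comp_hasDerivAt t hγ
  simp [InnerProductSpace.toDual_apply_apply] at h
  exact h

lemma descent (L : ℝ) (hL : 0 < L) (f : E → ℝ) (f' : E → E)
    (hgrad : ∀ x, HasGradientAt f (f' x) x)
    (hlip : ∀ x y, ‖f' x - f' y‖ ≤ L * ‖x - y‖) (x y : E) :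
    f y ≤ f x + ⟪f' x, y - x⟫ + L / 2 * ‖y - x‖ ^ 2 := by
  set u := y - x with hu
  set φ : ℝ → ℝ := fun τ => f (x + τ • u) - τ * ⟪f' x, u⟫ - L / 2 * ‖u‖ ^ 2 * τ ^ 2 with hφ
  have hd : ∀ τ : ℝ, HasDerivAt φ
      (⟪f' (x + τ • u), u⟫ - ⟪f' x, u⟫ - L / 2 * ‖u‖ ^ 2 * (2 * τ ^ 1)) τ := by
    intro τ
    exact ((dirDeriv f f' hgrad x u τ).sub (hasDerivAt_mul_const _)).sub
      ((hasDerivAt_pow 2 τ).const_mul _)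
  have hanti : AntitoneOn φ (Set.Icc (0:ℝ) 1) := by
    apply antitoneOn_of_deriv_nonpos (convex_Icc 0 1)
    · exact fun τ _ => ((hd τ).differentiableAt).continuousAt.continuousWithinAt
    · exact fun τ _ => ((hd τ).differentiableAt).differentiableWithinAt
    · intro τ hτ
      rw [interior_Icc] at hτ
      rw [(hd τ).deriv]
      have h1 : ⟪f' (x + τ • u) - f' x, u⟫ ≤ ‖f' (x + τ • u) - f' x‖ * ‖u‖ :=
        real_inner_le_norm _ _
      have h2 : ‖f' (x + τ • u) - f' x‖ ≤ L * (τ * ‖u‖) := by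
        have := hlip (x + τ • u) x
        simpa [norm_smul, abs_of_nonneg hτ.1.le] using this
      have h3 : ‖f' (x + τ • u) - f' x‖ * ‖u‖ ≤ L * (τ * ‖u‖) * ‖u‖ :=
        mul_le_mul_of_nonneg_right h2 (norm_nonneg _)
      have h4 : ⟪f' (x + τ • u), u⟫ - ⟪f' x, u⟫ = ⟪f' (x + τ • u) - f' x, u⟫ := by
        rw [inner_sub_left]
      nlinarith [sq_nonneg ‖u‖]
  have h01 := hanti (Set.left_mem_Icc.2 zero_le_one) (Set.right_mem_Icc.2 zero_le_one)
    zero_le_one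
  have e0 : φ 0 = f x := by simp [hφ]
  have e1 : φ 1 = f y - ⟪f' x, u⟫ - L / 2 * ‖u‖ ^ 2 := by
    simp [hφ, hu]
  rw [e0, e1] at h01
  linarith

lemma lowerq (L μ : ℝ) (hL : 0 < L) (hμ : 0 ≤ μ) (f : E → ℝ) (f' : E → E)
    (hgrad : ∀ x, HasGradientAt f (f' x) x)
    (hconv : ∀ x y, f y - f x ≥ ⟪f' x, y - x⟫ + μ / 2 * ‖y - x‖ ^ 2)
    (hlip : ∀ x y, ‖f' x - f' y‖ ≤ L * ‖x - y‖) (x y : E) :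
    f x + ⟪f' x, y - x⟫ + 1 / (2 * L) * ‖f' y - f' x‖ ^ 2 ≤ f y := by
  set q := f' y - f' x with hq
  set z := y - (1 / L) • q with hz
  have h1 := descent L hL f f' hgrad hlip y z
  have h2 : f x + ⟪f' x, z - x⟫ ≤ f z := by
    have := hconv x z
    nlinarith [sq_nonneg ‖z - x‖, mul_nonneg hμ (sq_nonneg ‖z - x‖)]
  have e1 : z - y = -((1 / L) • q) := by rw [hz]; abel
  have e2 : ⟪f' y, z - y⟫ = -(1 / L) * ⟪f' y, q⟫ := by
    rw [e1, inner_neg_right, real_inner_smul_right]; ring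
  have e3 : ‖z - y‖ ^ 2 = (1 / L) ^ 2 * ‖q‖ ^ 2 := by
    rw [e1, norm_neg, norm_smul]
    rw [Real.norm_eq_abs, abs_of_nonneg (by positivity : (0:ℝ) ≤ 1 / L)]
    ring
  have e4 : ⟪f' x, z - x⟫ = ⟪f' x, y - x⟫ - (1 / L) * ⟪f' x, q⟫ := by
    have : z - x = (y - x) - (1 / L) • q := by rw [hz]; abel
    rw [this, inner_sub_right, real_inner_smul_right]
  have e5 : ⟪f' y, q⟫ - ⟪f' x, q⟫ = ‖q‖ ^ 2 := by
    rw [← inner_sub_left, ← hq, real_inner_self_eq_norm_sq]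
  rw [e2, e3] at h1
  rw [e4] at h2
  have hL' : L ≠ 0 := ne_of_gt hL
  have key : (1 / L) * ⟪f' y, q⟫ - (1 / L) * ⟪f' x, q⟫ = (1 / L) * ‖q‖ ^ 2 := by
    rw [← mul_sub, e5]
  have e6 : L / 2 * ((1 / L) ^ 2 * ‖q‖ ^ 2) = 1 / (2 * L) * ‖q‖ ^ 2 := by
    field_simp
  have e7 : (1 / L) * ‖q‖ ^ 2 = 2 * (1 / (2 * L) * ‖q‖ ^ 2) := by
    field_simp
  linarith

set_option maxHeartbeats 4000000 in
/-- along the zero-order-hold trajectory p(t) = p̂ + t X^a_hb(p̂),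
t ↦ V(p(t)) is differentiable and
(d/dt)V(p(t)) + (√μ/4)V(p(t)) ≤ b^d_ET(p̂,t;a) ≤ b^d_ST(p̂,t;a) for t ≥ 0. -/
theorem stmt_7 {n : ℕ} (μ L s : ℝ) (hμ : 0 < μ) (hμL : μ ≤ L) (hs : 0 < s)
    (f : EuclideanSpace ℝ (Fin n) → ℝ)
    (f' : EuclideanSpace ℝ (Fin n) → EuclideanSpace ℝ (Fin n))
    (hgrad : ∀ x, HasGradientAt f (f' x) x)
    (hconv : ∀ x y, f y - f x ≥ ⟪f' x, y - x⟫ + μ / 2 * ‖y - x‖ ^ 2)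
    (hlip : ∀ x y, ‖f' x - f' y‖ ≤ L * ‖x - y‖)
    (xs : EuclideanSpace ℝ (Fin n)) (hmin : ∀ x, f xs ≤ f x) (hgs : f' xs = 0)
    (a : ℝ) (ha : 0 ≤ a) (xh vh : EuclideanSpace ℝ (Fin n)) :
    ∀ t : ℝ, 0 ≤ t →
      DifferentiableAt ℝ (fun τ : ℝ => Vf μ s f xs (xh + τ • vh)
        (vh - τ • ((2 * Real.sqrt μ) • vh + ms μ s • f' (xh + a • vh)))) t ∧
      deriv (fun τ : ℝ => Vf μ s f xs (xh + τ • vh)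
        (vh - τ • ((2 * Real.sqrt μ) • vh + ms μ s • f' (xh + a • vh)))) t
        + Real.sqrt μ / 4 * Vf μ s f xs (xh + t • vh)
            (vh - t • ((2 * Real.sqrt μ) • vh + ms μ s • f' (xh + a • vh)))
        ≤ bdET μ L s f f' a xh vh t ∧
      bdET μ L s f f' a xh vh t ≤ bdST μ L s f f' a xh vh t := by
  have hL : 0 < L := lt_of_lt_of_le hμ hμL
  obtain ⟨m, hm0, rfl⟩ : ∃ m : ℝ, 0 < m ∧ m ^ 2 = μ :=
    ⟨Real.sqrt μ, Real.sqrt_pos.2 hμ, Real.sq_sqrt hμ.le⟩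
  obtain ⟨d, rfl⟩ : ∃ d, xh = xs + d := ⟨xh - xs, by simp⟩
  have hss : 0 < Real.sqrt s := Real.sqrt_pos.2 hs
  have hsq : Real.sqrt (m ^ 2) = m := Real.sqrt_sq hm0.le
  have hsqs : Real.sqrt (m ^ 2 * s) = m * Real.sqrt s := by
    rw [Real.sqrt_mul (sq_nonneg m), hsq]
  have hM1 : 0 < 1 + m * Real.sqrt s := by nlinarith
  -- scalar facts
  have hcomm : ∀ x y : EuclideanSpace ℝ (Fin n), ⟪x, y⟫ = ⟪y, x⟫ :=
    fun x y => real_inner_comm y x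
  -- co-coercivity at (xs+d+a•vh, xs)
  have eys : xs - (xs + d + a • vh) = -(d + a • vh) := by abel
  have eys' : (xs + d + a • vh) - xs = d + a • vh := by abel
  have eds : (xs + d) - xs = d := by abel
  have hnay : ‖xs - (xs + d + a • vh)‖ = ‖d + a • vh‖ := by rw [eys, norm_neg]
  have hy2 : ‖d + a • vh‖ ^ 2 = ⟪d, d⟫ + 2 * a * ⟪vh, d⟫ + a ^ 2 * ⟪vh, vh⟫ := by
    rw [← real_inner_self_eq_norm_sq]
    simp only [inner_add_left, inner_add_right, real_inner_smul_left, real_inner_smul_right]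
    rw [hcomm d vh]
    ring
  have higy : ⟪f' (xs + d + a • vh), xs - (xs + d + a • vh)⟫
      = -(⟪d, f' (xs + d + a • vh)⟫ + a * ⟪vh, f' (xs + d + a • vh)⟫) := by
    rw [eys, inner_neg_right, inner_add_right, real_inner_smul_right,
      hcomm _ d, hcomm _ vh]
  have hcoco : ⟪f' (xs + d + a • vh), f' (xs + d + a • vh)⟫ / L
      ≤ ⟪d, f' (xs + d + a • vh)⟫ + a * ⟪vh, f' (xs + d + a • vh)⟫ := by
    have l1 := lowerq L (m ^ 2) hL (sq_nonneg m) f f' hgrad hconv hlip xs (xs + d + a • vh)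
    have l2 := lowerq L (m ^ 2) hL (sq_nonneg m) f f' hgrad hconv hlip (xs + d + a • vh) xs
    rw [hgs] at l1 l2
    simp only [inner_zero_left, sub_zero, zero_sub, norm_neg] at l1 l2
    rw [higy] at l2
    have hq2 : ‖f' (xs + d + a • vh)‖ ^ 2
        = ⟪f' (xs + d + a • vh), f' (xs + d + a • vh)⟫ := (real_inner_self_eq_norm_sq _).symm
    rw [hq2] at l1 l2
    have e7 : 1 / (2 * L) * ⟪f' (xs + d + a • vh), f' (xs + d + a • vh)⟫ * 2
        = ⟪f' (xs + d + a • vh), f' (xs + d + a • vh)⟫ / L := by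
      field_simp
    linarith
  -- strong convexity at (xs+d+a•vh, xs)
  have hSCs : -(⟪d, f' (xs + d + a • vh)⟫)
      ≤ (f xs - f (xs + d + a • vh)) + a * ⟪vh, f' (xs + d + a • vh)⟫
        - m ^ 2 / 2 * (⟪d, d⟫ + 2 * a * ⟪vh, d⟫ + a ^ 2 * ⟪vh, vh⟫) := by
    have := hconv (xs + d + a • vh) xs
    rw [higy, hnay, hy2] at this
    linarith
  -- PL-type inequality at xs+d
  have hPL : ⟪f' (xs + d), f' (xs + d)⟫ / (2 * L) ≤ f (xs + d) - f xs := by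
    have l1 := lowerq L (m ^ 2) hL (sq_nonneg m) f f' hgrad hconv hlip xs (xs + d)
    rw [hgs] at l1
    simp only [inner_zero_left, sub_zero] at l1
    rw [real_inner_self_eq_norm_sq]
    have : 1 / (2 * L) * ‖f' (xs + d)‖ ^ 2 = ‖f' (xs + d)‖ ^ 2 / (2 * L) := by ring
    linarith
  -- μ‖d‖ ≤ ‖∇f(x̂)‖
  have hμd : m ^ 2 * ‖d‖ ≤ ‖f' (xs + d)‖ := by
    have h1 := hconv xs (xs + d)
    have h2 := hconv (xs + d) xs
    rw [hgs] at h1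
    simp only [inner_zero_left] at h1
    rw [eds] at h1
    have e1 : xs - (xs + d) = -d := by abel
    rw [e1, norm_neg, inner_neg_right] at h2
    have h3 : m ^ 2 * ‖d‖ ^ 2 ≤ ⟪f' (xs + d), d⟫ := by linarith
    have h4 : ⟪f' (xs + d), d⟫ ≤ ‖f' (xs + d)‖ * ‖d‖ := real_inner_le_norm _ _
    rcases eq_or_lt_of_le (norm_nonneg d) with h | h
    · rw [← h]; simp [norm_nonneg]
    · nlinarith [sq_nonneg ‖d‖]
  have hLip0 : ‖f' (xs + d)‖ ≤ L * ‖d‖ := by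
    have := hlip (xs + d) xs
    rw [hgs, sub_zero, eds] at this
    exact this
  have hCSvd : |⟪vh, d⟫| ≤ ‖vh‖ * ‖d‖ := abs_real_inner_le_norm _ _
  have hnv2 : ‖vh‖ ^ 2 = ⟪vh, vh⟫ := (real_inner_self_eq_norm_sq _).symm
  have hnd2 : ‖d‖ ^ 2 = ⟪d, d⟫ := (real_inner_self_eq_norm_sq _).symm
  intro t ht
  set w := (2 * Real.sqrt (m ^ 2)) • vh + ms (m ^ 2) s • f' (xs + d + a • vh) with hwdef
  have hfun : (fun τ : ℝ => Vf (m ^ 2) s f xs (xs + d + τ • vh) (vh - τ • w))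
      = fun τ : ℝ =>
    ms (m ^ 2) s * (f (xs + d + τ • vh) - f xs)
      + 1 / 4 * ⟪vh - τ • w, vh - τ • w⟫
      + 1 / 4 * ⟪vh - τ • w + (2 * Real.sqrt (m ^ 2)) • (xs + d + τ • vh - xs),
          vh - τ • w + (2 * Real.sqrt (m ^ 2)) • (xs + d + τ • vh - xs)⟫ := by
    funext τ
    simp only [Vf, real_inner_self_eq_norm_sq]
  have hf1 := dirDeriv f f' hgrad (xs + d) vh t
  have hz1 : HasDerivAt (fun τ : ℝ => vh - τ • w) (-w) t := by
    simpa using ((hasDerivAt_id t).smul_const w).const_sub vh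
  have hz2 : HasDerivAt
      (fun τ : ℝ => vh - τ • w + (2 * Real.sqrt (m ^ 2)) • (xs + d + τ • vh - xs))
      (-w + (2 * Real.sqrt (m ^ 2)) • vh) t := by
    have h2 : HasDerivAt (fun τ : ℝ => (2 * Real.sqrt (m ^ 2)) • (xs + d + τ • vh - xs))
        ((2 * Real.sqrt (m ^ 2)) • vh) t := by
      simpa [Pi.smul_def] using ((((hasDerivAt_id t).smul_const vh).const_add (xs + d)).sub_const
        xs).const_smul (2 * Real.sqrt (m ^ 2))
    exact hz1.add h2
  have hΨ := (((hf1.sub_const (f xs)).const_mul (ms (m ^ 2) s)).add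
      ((hz1.inner ℝ hz1).const_mul (1 / 4 : ℝ))).add
      ((hz2.inner ℝ hz2).const_mul (1 / 4 : ℝ))
  rw [hfun]
  refine ⟨hΨ.differentiableAt, ?_, ?_⟩
  · -- first inequality
    simp only [Pi.add_def] at hΨ
    rw [hΨ.deriv]
    -- scaled facts
    have F0 : m ^ 2 * (1 + m * Real.sqrt s) * t / 4
          * (⟪f' (xs + d + a • vh), f' (xs + d + a • vh)⟫ / L)
        ≤ m ^ 2 * (1 + m * Real.sqrt s) * t / 4
          * (⟪d, f' (xs + d + a • vh)⟫ + a * ⟪vh, f' (xs + d + a • vh)⟫) := by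
      apply mul_le_mul_of_nonneg_left hcoco
      have := mul_nonneg (mul_nonneg (sq_nonneg m) hM1.le) ht
      linarith
    have F1 : (1 + m * Real.sqrt s) * m * (-(⟪d, f' (xs + d + a • vh)⟫))
        ≤ (1 + m * Real.sqrt s) * m * ((f xs - f (xs + d + a • vh))
            + a * ⟪vh, f' (xs + d + a • vh)⟫
            - m ^ 2 / 2 * (⟪d, d⟫ + 2 * a * ⟪vh, d⟫ + a ^ 2 * ⟪vh, vh⟫)) :=
      mul_le_mul_of_nonneg_left hSCs (by positivity)
    have F2 : (3 * (1 + m * Real.sqrt s) * m / 4)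
          * (⟪f' (xs + d), f' (xs + d)⟫ / (2 * L))
        ≤ (3 * (1 + m * Real.sqrt s) * m / 4) * (f (xs + d) - f xs) :=
      mul_le_mul_of_nonneg_left hPL (by positivity)
    have F3 : (1 + m * Real.sqrt s) * m ^ 3 * a * (-(⟪vh, d⟫))
        ≤ (1 + m * Real.sqrt s) * m ^ 3 * a * (‖vh‖ * ‖d‖) :=
      mul_le_mul_of_nonneg_left (by cases' abs_le.1 hCSvd with h1 h2; linarith)
        (by positivity)
    have F4 : (1 + m * Real.sqrt s) * m * a * ‖vh‖ * (m ^ 2 * ‖d‖)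
        ≤ (1 + m * Real.sqrt s) * m * a * ‖vh‖ * ‖f' (xs + d)‖ :=
      mul_le_mul_of_nonneg_left hμd (by positivity)
    have F5 : m ^ 2 / 4 * ⟪vh, d⟫ ≤ m ^ 2 / 4 * (‖vh‖ * ‖d‖) :=
      mul_le_mul_of_nonneg_left (by cases' abs_le.1 hCSvd with h1 h2; linarith)
        (by positivity)
    have F6 : m ^ 2 / 4 * (‖vh‖ * ‖d‖) ≤ m / 16 * ⟪vh, vh⟫ + m ^ 3 / 4 * ⟪d, d⟫ := by
      rw [← hnv2, ← hnd2]
      nlinarith [sq_nonneg (m * ‖vh‖ - 2 * m ^ 2 * ‖d‖), hm0]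
    have F7 : m ^ 4 * Real.sqrt s / (2 * L ^ 2) * ⟪f' (xs + d), f' (xs + d)⟫
        ≤ m ^ 4 * Real.sqrt s / 2 * ⟪d, d⟫ := by
      rw [← hnd2]
      have h1 : ‖f' (xs + d)‖ ^ 2 ≤ (L * ‖d‖) ^ 2 :=
        pow_le_pow_left₀ (norm_nonneg _) hLip0 2
      rw [← real_inner_self_eq_norm_sq] at h1
      have h2 : m ^ 4 * Real.sqrt s / (2 * L ^ 2) * ⟪f' (xs + d), f' (xs + d)⟫
          ≤ m ^ 4 * Real.sqrt s / (2 * L ^ 2) * ((L * ‖d‖) ^ 2) :=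
        mul_le_mul_of_nonneg_left h1 (by positivity)
      have h3 : m ^ 4 * Real.sqrt s / (2 * L ^ 2) * ((L * ‖d‖) ^ 2)
          = m ^ 4 * Real.sqrt s / 2 * ‖d‖ ^ 2 := by
        field_simp
      linarith
    simp only [hwdef, bdET, AET, BET, CET, Vf, ms, hsq, hsqs]
    simp only [← real_inner_self_eq_norm_sq]
    simp only [inner_add_left, inner_add_right, inner_sub_left, inner_sub_right,
      inner_neg_left, inner_neg_right, real_inner_smul_left, real_inner_smul_right,
      norm_smul, Real.norm_eq_abs, abs_of_nonneg ha]
    simp only [hcomm (f' (xs + d + a • vh)) vh, hcomm (f' (xs + d + a • vh)) d,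
      hcomm d vh, hcomm vh (f' (xs + d + t • vh)), hcomm vh (f' (xs + d)),
      hcomm vh xs, hcomm d xs, hcomm (f' (xs + d + a • vh)) xs]
    ring_nf at F0 F1 F2 F3 F4 F5 F6 F7 ⊢
    linarith [F0, F1, F2, F3, F4, F5, F6, F7]
  · -- second inequality: bdET ≤ bdST
    have base1 : ⟪f' (xs + d + t • vh), vh⟫ - ⟪f' (xs + d), vh⟫ ≤ L * t * (‖vh‖ * ‖vh‖) := by
      have h1 : ⟪f' (xs + d + t • vh) - f' (xs + d), vh⟫
          ≤ ‖f' (xs + d + t • vh) - f' (xs + d)‖ * ‖vh‖ := real_inner_le_norm _ _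
      have h2 : ‖f' (xs + d + t • vh) - f' (xs + d)‖ ≤ L * (t * ‖vh‖) := by
        have := hlip (xs + d + t • vh) (xs + d)
        have e : (xs + d + t • vh) - (xs + d) = t • vh := by abel
        rw [e] at this
        simpa [norm_smul, abs_of_nonneg ht] using this
      have h3 := mul_le_mul_of_nonneg_right h2 (norm_nonneg vh)
      rw [inner_sub_left] at h1
      nlinarith
    have base2 : f (xs + d + t • vh) ≤ f (xs + d) + t * ⟪f' (xs + d), vh⟫
        + L / 2 * (t ^ 2 * ‖vh‖ ^ 2) := by
      have h1 := descent L hL f f' hgrad hlip (xs + d) (xs + d + t • vh)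
      have e : (xs + d + t • vh) - (xs + d) = t • vh := by abel
      rw [e, real_inner_smul_right] at h1
      have e2 : ‖t • vh‖ ^ 2 = t ^ 2 * ‖vh‖ ^ 2 := by
        rw [norm_smul, Real.norm_eq_abs, mul_pow, sq_abs]
      rw [e2] at h1
      linarith
    have G1 : (1 + m * Real.sqrt s) * (⟪f' (xs + d + t • vh), vh⟫ - ⟪f' (xs + d), vh⟫)
        ≤ (1 + m * Real.sqrt s) * (L * t * ⟪vh, vh⟫) := by
      apply mul_le_mul_of_nonneg_left _ hM1.le
      rw [← hnv2]; nlinarith [base1]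
    have G2 : (m * (1 + m * Real.sqrt s) / 4) * (f (xs + d + t • vh))
        ≤ (m * (1 + m * Real.sqrt s) / 4) * (f (xs + d) + t * ⟪f' (xs + d), vh⟫
            + L / 2 * (t ^ 2 * ⟪vh, vh⟫)) := by
      apply mul_le_mul_of_nonneg_left _ (by positivity : (0:ℝ) ≤ m * (1 + m * Real.sqrt s) / 4)
      rw [← hnv2]; exact base2
    simp only [bdET, bdST, AET, BET, CET, AST, BlST, BqST, ms, hsq, hsqs]
    simp only [← real_inner_self_eq_norm_sq]
    simp only [inner_add_left, inner_add_right, inner_sub_left, inner_sub_right,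
      inner_neg_left, inner_neg_right, real_inner_smul_left, real_inner_smul_right,
      norm_smul, Real.norm_eq_abs, abs_of_nonneg ha]
    simp only [hcomm (f' (xs + d + a • vh)) vh, hcomm (f' (xs + d + a • vh)) d,
      hcomm d vh, hcomm vh (f' (xs + d + t • vh)), hcomm vh (f' (xs + d)),
      hcomm vh xs, hcomm d xs, hcomm (f' (xs + d + a • vh)) xs]
    ring_nf at G1 G2 ⊢
    linarith [G1, G2]

end
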